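/- Let A be a normal element (A A* = A* A) of a unital C*-algebra 𝔄. Then for every λ ∈ ℂ, λ belongs to the spectrum of A (i.e., A − λ·1 is not invertible in 𝔄) if and only if there exists a state ω on 𝔄 that is an eigenstate of A with eigenvalue λ. -/

import Mathlib

set_option maxHeartbeats 800000


variable {𝔄 : Type*} [CStarAlgebra 𝔄]

/-- A state on a unital C*-algebra `𝔄`: a continuous linear functional `ω : 𝔄 → ℂ`
which is normalized (`ω 1 = 1`) and positive (`ω (a* a)` is a nonnegative real number). -/
def IsState (ω : 𝔄 → ℂ) : Prop :=
  Continuous ω ∧ IsLinearMap ℂ ω ∧ ω 1 = 1 ∧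
    ∀ a : 𝔄, ∃ r : ℝ, 0 ≤ r ∧ ω (star a * a) = (r : ℂ)

/-- `ω` is an eigenstate of `A` with eigenvalue `l` if `ω (B * A) = l * ω B` for all `B`. -/
def IsEigenstate (ω : 𝔄 → ℂ) (A : 𝔄) (l : ℂ) : Prop :=
  ∀ B : 𝔄, ω (B * A) = l * ω B

/-- For a normal element `A`, a complex number `l` is in the spectrum of `A`
(i.e. `A - l•1` is not invertible) iff there exists an eigenstate of `A`
with eigenvalue `l`. -/

private lemma aux_zero (K : ℝ) (z : ℂ)
    (h : ∀ t : ℝ, ∃ r : ℝ, 0 ≤ r ∧ (K : ℂ) + (t : ℂ) * z = (r : ℂ)) : z = 0 := by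
  obtain ⟨r₁, _, h1⟩ := h 1
  have hz : z = ((r₁ - K : ℝ) : ℂ) := by push_cast at h1 ⊢; linear_combination h1
  by_contra hne
  have hsne : (r₁ - K : ℝ) ≠ 0 := by
    intro h0
    exact hne (by rw [hz, h0, Complex.ofReal_zero])
  obtain ⟨r, hr, h2⟩ := h (-(K + 1) / (r₁ - K))
  rw [hz] at h2
  have h3 : K + (-(K + 1) / (r₁ - K)) * (r₁ - K) = r := by exact_mod_cast h2
  rw [div_mul_cancel₀ _ hsne] at h3
  linarith

private lemma im_zero (g : 𝔄 →L[ℂ] ℂ) (hg : ‖g‖ ≤ 1) (h1 : g 1 = 1) {a : 𝔄}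
    (ha : IsSelfAdjoint a) : (g a).im = 0 := by
  have hnt : Nontrivial 𝔄 := by
    refine nontrivial_of_ne 1 0 fun h => ?_
    rw [h, map_zero] at h1
    exact one_ne_zero h1.symm
  set α := (g a).re with hα
  set β := (g a).im with hβ
  have key : ∀ t : ℝ, α ^ 2 + (β + t) ^ 2 ≤ ‖a‖ ^ 2 + t ^ 2 := by
    intro t
    set c : ℂ := (t : ℂ) * Complex.I with hc
    have hstar : star (a + c • (1 : 𝔄)) = a - c • 1 := by
      simp [star_smul, ha.star_eq, hc, Complex.conj_I, sub_eq_add_neg, neg_smul]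
    have hcc : -(c * c) = (((t : ℝ) ^ 2 : ℝ) : ℂ) := by
      rw [hc]
      push_cast
      rw [mul_mul_mul_comm, Complex.I_mul_I]
      ring
    have hmul : star (a + c • (1 : 𝔄)) * (a + c • 1) = a * a + ((t : ℝ) ^ 2) • (1 : 𝔄) := by
      rw [hstar]
      have h2 : (a - c • 1) * (a + c • 1) = a * a - (c * c) • (1 : 𝔄) := by
        simp only [sub_mul, mul_add, smul_mul_assoc, mul_smul_comm, one_mul, mul_one, smul_smul]
        module
      rw [h2, sub_eq_add_neg, ← neg_smul, hcc, ← Complex.coe_algebraMap, algebraMap_smul]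
    have hnorm1 : ‖a + c • (1 : 𝔄)‖ ^ 2 ≤ ‖a‖ ^ 2 + t ^ 2 := by
      have e1 : ‖a + c • (1 : 𝔄)‖ ^ 2 = ‖star (a + c • (1 : 𝔄)) * (a + c • 1)‖ := by
        rw [CStarRing.norm_star_mul_self]; ring
      rw [e1, hmul]
      calc ‖a * a + ((t : ℝ) ^ 2) • (1 : 𝔄)‖ ≤ ‖a * a‖ + ‖((t : ℝ) ^ 2) • (1 : 𝔄)‖ :=
            norm_add_le _ _
        _ ≤ ‖a‖ * ‖a‖ + t ^ 2 := by
            have h2 : ‖((t : ℝ) ^ 2) • (1 : 𝔄)‖ = t ^ 2 := by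
              rw [norm_smul, norm_one, mul_one, Real.norm_eq_abs, abs_of_nonneg (sq_nonneg t)]
            rw [h2]
            exact add_le_add_left (norm_mul_le a a) _
        _ = ‖a‖ ^ 2 + t ^ 2 := by ring
    have hgval : g (a + c • (1 : 𝔄)) = g a + c := by
      rw [map_add, map_smul, h1, smul_eq_mul, mul_one]
    have hgn : ‖g (a + c • (1 : 𝔄))‖ ≤ ‖a + c • (1 : 𝔄)‖ := by
      calc ‖g (a + c • (1 : 𝔄))‖ ≤ ‖g‖ * ‖a + c • (1 : 𝔄)‖ := g.le_opNorm _
        _ ≤ 1 * ‖a + c • (1 : 𝔄)‖ := mul_le_mul_of_nonneg_right hg (norm_nonneg _)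
        _ = ‖a + c • (1 : 𝔄)‖ := one_mul _
    have hsq : ‖g a + c‖ ^ 2 = α ^ 2 + (β + t) ^ 2 := by
      rw [Complex.sq_norm, Complex.normSq_apply]
      simp [hc, hα, hβ]
      ring
    have : ‖g a + c‖ ^ 2 ≤ ‖a + c • (1 : 𝔄)‖ ^ 2 := by
      apply pow_le_pow_left₀ (norm_nonneg _)
      rw [← hgval]; exact hgn
    rw [hsq] at this
    linarith
  by_contra hβne
  set M := ‖a‖ ^ 2 - α ^ 2 - β ^ 2 with hM
  have h2 : ∀ t : ℝ, 2 * β * t ≤ M := by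
    intro t
    have := key t
    rw [hM]
    nlinarith
  have h3 := h2 ((M + 1) / (2 * β))
  rw [mul_div_cancel₀ _ (by simpa using hβne : (2 : ℝ) * β ≠ 0)] at h3
  linarith

private lemma pos_of (g : 𝔄 →L[ℂ] ℂ) (hg : ‖g‖ ≤ 1) (h1 : g 1 = 1) (a : 𝔄) :
    ∃ r : ℝ, 0 ≤ r ∧ g (star a * a) = (r : ℂ) := by
  letI := CStarAlgebra.spectralOrder 𝔄
  haveI := CStarAlgebra.spectralOrderedRing 𝔄
  set x := star a * a with hx
  have hxsa : IsSelfAdjoint x := IsSelfAdjoint.star_mul_self a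
  have hxnn : (0 : 𝔄) ≤ x := star_mul_self_nonneg a
  set y := algebraMap ℝ 𝔄 ‖x‖ - x with hy
  have hysa : IsSelfAdjoint y := by
    have h2 : IsSelfAdjoint (algebraMap ℝ 𝔄 ‖x‖) := IsSelfAdjoint.algebraMap 𝔄 (IsSelfAdjoint.all _)
    exact h2.sub hxsa
  have hynn : (0 : 𝔄) ≤ y := sub_nonneg.mpr hxsa.le_algebraMap_norm_self
  have hyle : ‖y‖ ≤ ‖x‖ := by
    rw [CStarAlgebra.norm_le_iff_le_algebraMap y (norm_nonneg x) hynn]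
    rw [hy]
    exact sub_le_self _ hxnn
  have hgyim : (g y).im = 0 := im_zero g hg h1 hysa
  have hgxim : (g x).im = 0 := im_zero g hg h1 hxsa
  have hgmap : g (algebraMap ℝ 𝔄 ‖x‖) = ((‖x‖ : ℝ) : ℂ) := by
    have h3 : algebraMap ℝ 𝔄 ‖x‖ = ((‖x‖ : ℝ) : ℂ) • (1 : 𝔄) := by
      rw [IsScalarTower.algebraMap_apply ℝ ℂ 𝔄, Complex.coe_algebraMap,
        Algebra.algebraMap_eq_smul_one]
    rw [h3, map_smul, h1, smul_eq_mul, mul_one]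
  have hgx : g x = ((‖x‖ : ℝ) : ℂ) - g y := by
    rw [hy, map_sub, hgmap]; ring
  have hgyre : (g y).re ≤ ‖x‖ := by
    calc (g y).re ≤ ‖g y‖ := Complex.re_le_norm _
      _ ≤ ‖g‖ * ‖y‖ := g.le_opNorm _
      _ ≤ 1 * ‖x‖ := mul_le_mul hg hyle (norm_nonneg _) zero_le_one
      _ = ‖x‖ := one_mul _
  refine ⟨(g x).re, ?_, ?_⟩
  · have : (g x).re = ‖x‖ - (g y).re := by
      rw [hgx]; simp
    linarith
  · exact (Complex.ext (by simp) (by simp [hgxim])).symm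

private lemma mul_eq_zero_of (ω : 𝔄 → ℂ) (hlin : IsLinearMap ℂ ω)
    (hpos : ∀ a : 𝔄, ∃ r : ℝ, 0 ≤ r ∧ ω (star a * a) = (r : ℂ))
    {N : 𝔄} (hN : ω (star N * N) = 0) (B : 𝔄) : ω (B * N) = 0 := by
  obtain ⟨K, hK0, hK⟩ := hpos (star B)
  rw [star_star] at hK
  set p := ω (B * N) with hp
  set q := ω (star N * star B) with hq
  have expand : ∀ c : ℂ, ω (star (star B + c • N) * (star B + c • N))
      = (K : ℂ) + c * p + (starRingEnd ℂ c) * q := by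
    intro c
    have halg : star (star B + c • N) * (star B + c • N)
        = B * star B + c • (B * N) + (starRingEnd ℂ c) • (star N * star B)
          + ((starRingEnd ℂ c) * c) • (star N * N) := by
      simp only [star_add, star_smul, star_star, add_mul, mul_add, smul_mul_assoc,
        mul_smul_comm, smul_smul, RCLike.star_def]
      module
    rw [halg, hlin.map_add, hlin.map_add, hlin.map_add, hlin.map_smul, hlin.map_smul,
      hlin.map_smul, hN, hK, ← hp, ← hq]
    simp only [smul_eq_mul, smul_zero]
    ring
  have h1 : p + q = 0 := by
    apply aux_zero K
    intro t
    obtain ⟨r, hr, heq⟩ := hpos (star B + (t : ℂ) • N)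
    refine ⟨r, hr, ?_⟩
    rw [← heq, expand]
    rw [Complex.conj_ofReal]
    ring
  have h2 : Complex.I * (p - q) = 0 := by
    apply aux_zero K
    intro t
    obtain ⟨r, hr, heq⟩ := hpos (star B + ((t : ℂ) * Complex.I) • N)
    refine ⟨r, hr, ?_⟩
    rw [← heq, expand]
    rw [map_mul, Complex.conj_ofReal, Complex.conj_I]
    ring
  have h3 : p - q = 0 := by
    rcases mul_eq_zero.mp h2 with h | h
    · exact absurd h Complex.I_ne_zero
    · exact h
  linear_combination (h1 + h3) / 2

theorem spectrum_eq_eigenvalues_of_normal (A : 𝔄) (hA : A * star A = star A * A) (l : ℂ) :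
    ¬ IsUnit (A - l • (1 : 𝔄)) ↔ ∃ ω : 𝔄 → ℂ, IsState ω ∧ IsEigenstate ω A l := by
  constructor
  · intro hNu
    set N := A - l • (1 : 𝔄) with hNdef
    have hnormal : star N * N = N * star N := by
      simp only [hNdef, star_sub, star_smul, star_one, sub_mul, mul_sub, smul_mul_assoc,
        mul_smul_comm, smul_smul, mul_one, one_mul, RCLike.star_def]
      rw [← hA]
      module
    -- star N * N is not a unit
    have hT : ¬ IsUnit (star N * N) := by
      intro h
      obtain ⟨u, hu⟩ := h
      apply hNu
      have hleft : ((↑u⁻¹ : 𝔄) * star N) * N = 1 := by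
        rw [mul_assoc, ← hu, u.inv_mul]
      have hright : N * (star N * (↑u⁻¹ : 𝔄)) = 1 := by
        rw [← mul_assoc, ← hnormal, ← hu, u.mul_inv]
      have heq : (↑u⁻¹ : 𝔄) * star N = star N * (↑u⁻¹ : 𝔄) := by
        calc (↑u⁻¹ : 𝔄) * star N = ((↑u⁻¹ : 𝔄) * star N) * (N * (star N * (↑u⁻¹ : 𝔄))) := by
              rw [hright, mul_one]
          _ = (((↑u⁻¹ : 𝔄) * star N) * N) * (star N * (↑u⁻¹ : 𝔄)) := by
              simp only [mul_assoc]
          _ = star N * (↑u⁻¹ : 𝔄) := by rw [hleft, one_mul]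
      exact ⟨⟨N, star N * (↑u⁻¹ : 𝔄), hright, by rw [← heq, hleft]⟩, rfl⟩
    set T := star N * N with hTdef
    have hTsa : IsSelfAdjoint T := IsSelfAdjoint.star_mul_self N
    haveI : IsStarNormal T := hTsa.isStarNormal
    have h0spec : (0 : ℂ) ∈ spectrum ℂ T := by
      rw [spectrum.mem_iff]
      simpa using hT
    haveI hnt : Nontrivial 𝔄 := by
      by_contra h
      rw [not_nontrivial_iff_subsingleton] at h
      exact hNu (isUnit_of_subsingleton _)
    obtain ⟨φ, hφ⟩ := (StarAlgebra.elemental.bijective_characterSpaceToSpectrum T).2 ⟨0, h0spec⟩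
    have hφT : φ ⟨T, StarAlgebra.elemental.self_mem ℂ T⟩ = 0 := congrArg Subtype.val hφ
    set p : Submodule ℂ 𝔄 :=
      Subalgebra.toSubmodule (StarAlgebra.elemental ℂ T).toSubalgebra with hpdef
    have hmem : ∀ z : p, (z : 𝔄) ∈ StarAlgebra.elemental ℂ T := fun z => z.2
    haveI : Nontrivial (StarAlgebra.elemental ℂ T) :=
      ⟨1, 0, fun h => one_ne_zero (congrArg Subtype.val h)⟩
    have hφ_bound : ∀ z : StarAlgebra.elemental ℂ T, ‖φ z‖ ≤ ‖z‖ := fun z =>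
      spectrum.norm_le_norm_of_mem (AlgHom.apply_mem_spectrum φ z)
    let f0 : p →ₗ[ℂ] ℂ :=
      { toFun := fun z => φ ⟨z.1, hmem z⟩
        map_add' := fun x y => by rw [← map_add]; rfl
        map_smul' := fun c x => by rw [← map_smul]; rfl }
    let f : p →L[ℂ] ℂ := f0.mkContinuous 1 (fun z => by
      rw [one_mul]
      exact hφ_bound ⟨z.1, hmem z⟩)
    obtain ⟨g, hg_ext, hg_norm⟩ := exists_extension_norm_eq p f
    have hg1 : ‖g‖ ≤ 1 := by
      rw [hg_norm]
      exact f0.mkContinuous_norm_le zero_le_one _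
    have h1mem : (1 : 𝔄) ∈ p := one_mem (StarAlgebra.elemental ℂ T)
    have hTmem : T ∈ p := StarAlgebra.elemental.self_mem ℂ T
    have hgone : g 1 = 1 := by
      rw [hg_ext ⟨1, h1mem⟩]
      exact map_one φ
    have hgT : g T = 0 := by
      rw [hg_ext ⟨T, hTmem⟩]
      exact hφT
    have hstate : IsState (fun x => g x) :=
      ⟨g.continuous, ⟨fun x y => map_add g x y, fun c x => map_smul g c x⟩, hgone,
        fun a => pos_of g hg1 hgone a⟩
    refine ⟨fun x => g x, hstate, fun B => ?_⟩
    have hBN : g (B * N) = 0 :=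
      mul_eq_zero_of (fun x => g x) ⟨fun x y => map_add g x y, fun c x => map_smul g c x⟩
        (fun a => pos_of g hg1 hgone a) (hTdef ▸ hgT) B
    have hBA : B * A = B * N + l • B := by
      rw [hNdef]
      rw [mul_sub, mul_smul_comm, mul_one, sub_add_cancel]
    show g (B * A) = l * g B
    rw [hBA, map_add, map_smul, hBN, zero_add, smul_eq_mul]
  · rintro ⟨ω, ⟨hc, hlin, h1, hpos⟩, heig⟩ hu
    obtain ⟨u, hu⟩ := hu
    have h0 : ω ((↑u⁻¹ : 𝔄) * (A - l • 1)) = 0 := by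
      have hsplit : (↑u⁻¹ : 𝔄) * (A - l • 1) = ↑u⁻¹ * A - l • (↑u⁻¹ : 𝔄) := by
        rw [mul_sub, mul_smul_comm, mul_one]
      rw [hsplit, hlin.map_sub, hlin.map_smul, heig (↑u⁻¹ : 𝔄), smul_eq_mul, sub_self]
    rw [← hu, u.inv_mul] at h0
    rw [h1] at h0
    exact one_ne_zero h0
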